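/- arXiv:2509.22171 — 2 statements merged into one kernel-verified Lean document; each statement's English description precedes it below -/
import Mathlib

section
/- Let E = ℝ × ℝⁿ × ℝⁿ with coordinates (t, q^i, v^i), κ^i = dq^i − v^i dt, I₁^{vak} = ⟨κ^i⟩, L : E → ℝ smooth, Θ_L = L dt + (∂L/∂v^i)κ^i. Let E' = E × ℝⁿ with additional coordinates p_i, π' : E' → E the projection, L' = L∘π', κ'^i = π'*(κ^i), and Ω_U = dL' ∧ dt + d(p_i κ'^i). Then the GVP (Ω_U, ∅, Γ(V(π∘π'))) is dynamically π'-equivalent to the GVP (dΘ_L, (∅, I₁^{vak}), Γ(V(π))): the map γ' ↦ π'∘γ' is injective on Sol(Ω_U, ∅, Γ(V(π∘π'))) and its image is exactly Sol(dΘ_L, (∅, I₁^{vak}), Γ(V(π))). -/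
open MeasureTheory Set Finset
open scoped ContDiff

noncomputable section

namespace VPGeom

variable {E : Type*} [NormedAddCommGroup E] [NormedSpace ℝ E]

/-- A smooth `k`-form in the function model: jointly smooth and, at each point,
given by an alternating multilinear map on the tangent space. -/
def IsFormK (k : ℕ) (α : E → (Fin k → E) → ℝ) : Prop :=
  ContDiff ℝ ∞ (fun p : E × (Fin k → E) => α p.1 p.2) ∧
    ∀ x : E, ∃ m : AlternatingMap ℝ E ℝ (Fin k), ∀ v, α x v = m v

/-- A smooth `1`-form in the function model. -/
def IsForm1 (θ : E → E → ℝ) : Prop :=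
  ContDiff ℝ ∞ (fun p : E × E => θ p.1 p.2) ∧ ∀ x : E, IsLinearMap ℝ (θ x)

/-- A smooth `2`-form in the function model. -/
def IsForm2 (Ω : E → E → E → ℝ) : Prop :=
  ContDiff ℝ ∞ (fun p : E × E × E => Ω p.1 p.2.1 p.2.2) ∧
    ∀ x : E, ∃ m : AlternatingMap ℝ E ℝ (Fin 2), ∀ u v : E, Ω x u v = m ![u, v]

/-- Exterior derivative of a `1`-form on a vector space
(formula with constant extensions of the tangent vectors). -/
def extd1 (θ : E → E → ℝ) : E → E → E → ℝ := fun x u v =>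
  fderiv ℝ (fun y => θ y v) x u - fderiv ℝ (fun y => θ y u) x v

/-- Exterior derivative of a `2`-form on a vector space. -/
def extd2 (Ω : E → E → E → ℝ) : E → E → E → E → ℝ := fun x u v w =>
  fderiv ℝ (fun y => Ω y v w) x u - fderiv ℝ (fun y => Ω y u w) x v +
    fderiv ℝ (fun y => Ω y u v) x w

/-- Lie derivative of a `1`-form along a vector field (on a vector space). -/
def lie1 (ξ : E → E) (θ : E → E → ℝ) : E → E → ℝ := fun x v =>
  fderiv ℝ (fun y => θ y v) x (ξ x) + θ x (fderiv ℝ ξ x v)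

/-- Wedge product of two `1`-forms. -/
def wedge11 (α β : E → E → ℝ) : E → E → E → ℝ := fun x u v =>
  α x u * β x v - α x v * β x u

/-- Wedge product of a `2`-form with a `1`-form. -/
def wedge21 (β : E → E → E → ℝ) (α : E → E → ℝ) : E → E → E → E → ℝ := fun x u v w =>
  β x u v * α x w - β x u w * α x v + β x v w * α x u

/-- Wedge product of a `1`-form with a `2`-form. -/
def wedge12 (α : E → E → ℝ) (β : E → E → E → ℝ) : E → E → E → E → ℝ := fun x u v w =>
  α x u * β x v w - α x v * β x u w + α x w * β x u v

/-- Interior product of a vector field with a `2`-form. -/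
def iota2 (ξ : E → E) (Ω : E → E → E → ℝ) : E → E → ℝ := fun x v => Ω x (ξ x) v

/-- `γ` is a smooth local section, over the open interval `I`, of the bundle over `ℝ`
whose projection ("time coordinate") is `T`. -/
structure IsSection (T : E → ℝ) (γ : ℝ → E) (I : Set ℝ) : Prop where
  isOpen : IsOpen I
  ordConnected : I.OrdConnected
  nonempty : I.Nonempty
  smooth : ContDiffOn ℝ ∞ γ I
  proj : ∀ t ∈ I, T (γ t) = t

/-- Membership in the `C^∞(E)`-ideal generated by a set of functions. -/
def InIdeal (I₀ : Set (E → ℝ)) (h : E → ℝ) : Prop :=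
  ∃ (m : ℕ) (f : Fin m → E → ℝ) (g : Fin m → E → ℝ),
    (∀ j, ContDiff ℝ ∞ (f j)) ∧ (∀ j, g j ∈ I₀) ∧ h = fun x => ∑ j, f j x * g j x

end VPGeom
namespace VPGeom

/-- `E = J¹ρ ≅ ℝ × ℝⁿ × ℝⁿ` with coordinates `(t, qⁱ, vⁱ)`. -/
abbrev E8 (n : ℕ) := ℝ × (Fin n → ℝ) × (Fin n → ℝ)

/-- The Cartan 1-forms `κⁱ = dqⁱ - vⁱ dt`. -/
def kap (n : ℕ) (i : Fin n) : E8 n → E8 n → ℝ := fun x w => w.2.1 i - x.2.2 i * w.1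

/-- `∂L/∂vⁱ`. -/
def dLv (n : ℕ) (L : E8 n → ℝ) (i : Fin n) : E8 n → ℝ := fun x =>
  fderiv ℝ L x ((0 : ℝ), (0 : Fin n → ℝ), Pi.single i 1)

/-- The Poincaré–Cartan 1-form `Θ_L = L dt + (∂L/∂vⁱ) κⁱ`. -/
def ThetaL (n : ℕ) (L : E8 n → ℝ) : E8 n → E8 n → ℝ := fun x w =>
  L x * w.1 + ∑ i, dLv n L i x * kap n i x w

end VPGeom
namespace VPGeom

/-- Membership in the `C^∞(E)`-module `I₁ᵛᵃᵏ = ⟨κ¹,…,κⁿ⟩` generated by the Cartan forms. -/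
def InKapSpan (n : ℕ) (α : E8 n → E8 n → ℝ) : Prop :=
  ∃ f : Fin n → E8 n → ℝ, (∀ j, ContDiff ℝ ∞ (f j)) ∧
    ∀ x w, α x w = ∑ j, f j x * kap n j x w

/-- The admissible variations for the vakonomically implemented holonomy constraints:
vertical smooth vector fields `ξ` with `ℒ_ξ κⁱ ∈ I₁ᵛᵃᵏ` for all `i`. -/
def AdmHol (n : ℕ) : Set (E8 n → E8 n) :=
  {ξ | ContDiff ℝ ∞ ξ ∧ (∀ x, (ξ x).1 = 0) ∧ ∀ i, InKapSpan n (lie1 ξ (kap n i))}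

/-- `⟨A⟩^{B(π)}`: all finite `B(π)`-linear combinations of elements of `A`. -/
def BSpan (n : ℕ) (A : Set (E8 n → E8 n)) : Set (E8 n → E8 n) :=
  {ξ | ∃ (m : ℕ) (g : Fin m → ℝ → ℝ) (ζ : Fin m → E8 n → E8 n),
    (∀ j, ContDiff ℝ ∞ (g j)) ∧ (∀ j, ζ j ∈ A) ∧ ξ = fun x => ∑ j, g j x.1 • ζ j x}

/-- The π-vertical smooth vector fields `Γ(V(π))` on `E = J¹ρ`. -/
def VertVF8 (n : ℕ) : Set (E8 n → E8 n) :=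
  {ξ | ContDiff ℝ ∞ ξ ∧ ∀ x, (ξ x).1 = 0}

end VPGeom

namespace VPGeom

/-- `E' = E × ℝⁿ` with additional momentum coordinates `pᵢ`. -/
abbrev E14 (n : ℕ) := E8 n × (Fin n → ℝ)

/-- The unified form `Ω_U = dL' ∧ dt + d(pᵢ κ'ⁱ)` on `E'`. -/
def OmegaU14 (n : ℕ) (L : E8 n → ℝ) : E14 n → E14 n → E14 n → ℝ := fun x u v =>
  wedge11 (fun y w => fderiv ℝ (fun z : E14 n => L z.1) y w) (fun _ w => w.1.1) x u v +
    extd1 (fun y w => ∑ i, y.2 i * kap n i y.1 w.1) x u v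

/-- Solution sections of the GVP `(Ω_U, ∅, Γ(V(π∘π')))` on `E'`. -/
def IsSolU14 (n : ℕ) (L : E8 n → ℝ) (γ' : ℝ → E14 n) (I : Set ℝ) : Prop :=
  IsSection (fun x => x.1.1) γ' I ∧
  ∀ ξ : E14 n → E14 n, ContDiff ℝ ∞ ξ → (∀ x, (ξ x).1.1 = 0) →
    ∀ t ∈ I, OmegaU14 n L (γ' t) (ξ (γ' t)) (deriv γ' t) = 0

/-- Solution sections of the GVP `(dΘ_L, (∅, I₁ᵛᵃᵏ), Γ(V(π)))` on `E`. -/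
def IsSolE14 (n : ℕ) (L : E8 n → ℝ) (γ : ℝ → E8 n) (I : Set ℝ) : Prop :=
  IsSection Prod.fst γ I ∧
  (∀ α : E8 n → E8 n → ℝ, InKapSpan n α → ∀ t ∈ I, α (γ t) (deriv γ t) = 0) ∧
  ∀ ξ ∈ VertVF8 n, ∀ t ∈ I, extd1 (ThetaL n L) (γ t) (ξ (γ t)) (deriv γ t) = 0


/-! ### Auxiliary machinery for Statement 14 -/

def vc8 (n : ℕ) (i : Fin n) : E8 n →L[ℝ] ℝ :=
  (ContinuousLinearMap.proj i).comp ((ContinuousLinearMap.snd ℝ (Fin n → ℝ) (Fin n → ℝ)).comp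
    (ContinuousLinearMap.snd ℝ ℝ ((Fin n → ℝ) × (Fin n → ℝ))))

@[simp] lemma vc8_apply (n : ℕ) (i : Fin n) (u : E8 n) : vc8 n i u = u.2.2 i := rfl

def pc (n : ℕ) (i : Fin n) : E14 n →L[ℝ] ℝ :=
  (ContinuousLinearMap.proj i).comp (ContinuousLinearMap.snd ℝ (E8 n) (Fin n → ℝ))

@[simp] lemma pc_apply (n : ℕ) (i : Fin n) (u : E14 n) : pc n i u = u.2 i := rfl

def vc14 (n : ℕ) (i : Fin n) : E14 n →L[ℝ] ℝ :=
  (vc8 n i).comp (ContinuousLinearMap.fst ℝ (E8 n) (Fin n → ℝ))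

@[simp] lemma vc14_apply (n : ℕ) (i : Fin n) (u : E14 n) : vc14 n i u = u.1.2.2 i := rfl

/-- `∂L/∂qⁱ`. -/
def dLq (n : ℕ) (L : E8 n → ℝ) (i : Fin n) : E8 n → ℝ := fun x =>
  fderiv ℝ L x ((0 : ℝ), Pi.single i 1, (0 : Fin n → ℝ))

lemma contDiff_dLv (n : ℕ) (L : E8 n → ℝ) (hL : ContDiff ℝ ∞ L) (i : Fin n) :
    ContDiff ℝ ∞ (dLv n L i) :=
  (hL.fderiv_right (by simp)).clm_apply contDiff_const

lemma fderiv_thetaSlice (n : ℕ) (a : E8 n) (y u : E14 n) :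
    fderiv ℝ (fun z : E14 n => ∑ i, z.2 i * kap n i z.1 a) y u
      = ∑ i, (u.2 i * kap n i y.1 a - y.2 i * (u.1.2.2 i * a.1)) := by
  have h : HasFDerivAt (fun z : E14 n => ∑ i, z.2 i * kap n i z.1 a)
      (∑ i, (y.2 i • -(a.1 • vc14 n i) + kap n i y.1 a • pc n i)) y := by
    apply HasFDerivAt.fun_sum
    intro i _
    have hp : HasFDerivAt (fun z : E14 n => z.2 i) (pc n i) y := (pc n i).hasFDerivAt
    have hv : HasFDerivAt (fun z : E14 n => z.1.2.2 i) (vc14 n i) y := (vc14 n i).hasFDerivAt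
    have hk : HasFDerivAt (fun z : E14 n => kap n i z.1 a) (-(a.1 • vc14 n i)) y := by
      simpa [kap] using (hv.mul_const a.1).const_sub (a.2.1 i)
    exact hp.mul hk
  rw [h.fderiv, ContinuousLinearMap.sum_apply]
  refine Finset.sum_congr rfl fun i _ => ?_
  simp [kap]
  ring

lemma omega_formula (n : ℕ) (L : E8 n → ℝ) (hL : ContDiff ℝ ∞ L) (x u w : E14 n) :
    OmegaU14 n L x u w =
      fderiv ℝ L x.1 u.1 * w.1.1 - fderiv ℝ L x.1 w.1 * u.1.1
      + (∑ i, (u.2 i * kap n i x.1 w.1 - x.2 i * (u.1.2.2 i * w.1.1))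
         - ∑ i, (w.2 i * kap n i x.1 u.1 - x.2 i * (w.1.2.2 i * u.1.1))) := by
  have hL1 : HasFDerivAt (fun z : E14 n => L z.1)
      ((fderiv ℝ L x.1).comp (ContinuousLinearMap.fst ℝ (E8 n) (Fin n → ℝ))) x :=
    ((hL.differentiable (by simp)) x.1).hasFDerivAt.comp x (hasFDerivAt_fst)
  simp only [OmegaU14, wedge11, extd1]
  rw [fderiv_thetaSlice, fderiv_thetaSlice, hL1.fderiv]
  simp only [ContinuousLinearMap.comp_apply, ContinuousLinearMap.coe_fst']

lemma fderiv_ThetaSlice (n : ℕ) (L : E8 n → ℝ) (hL : ContDiff ℝ ∞ L) (a : E8 n) (y u : E8 n) :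
    fderiv ℝ (fun x => ThetaL n L x a) y u
      = fderiv ℝ L y u * a.1
        + ∑ i, (fderiv ℝ (dLv n L i) y u * kap n i y a - dLv n L i y * (u.2.2 i * a.1)) := by
  have h : HasFDerivAt (fun x : E8 n => ThetaL n L x a)
      (a.1 • fderiv ℝ L y
        + ∑ i, (dLv n L i y • -(a.1 • vc8 n i) + kap n i y a • fderiv ℝ (dLv n L i) y)) y := by
    have h1 : HasFDerivAt (fun x : E8 n => L x * a.1) (a.1 • fderiv ℝ L y) y :=
      ((hL.differentiable (by simp)) y).hasFDerivAt.mul_const a.1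
    have h2 : HasFDerivAt (fun x : E8 n => ∑ i, dLv n L i x * kap n i x a)
        (∑ i, (dLv n L i y • -(a.1 • vc8 n i) + kap n i y a • fderiv ℝ (dLv n L i) y)) y := by
      apply HasFDerivAt.fun_sum
      intro i _
      have hdi : HasFDerivAt (dLv n L i) (fderiv ℝ (dLv n L i) y) y :=
        ((contDiff_dLv n L hL i).differentiable (by simp) y).hasFDerivAt
      have hv : HasFDerivAt (fun x : E8 n => x.2.2 i) (vc8 n i) y := (vc8 n i).hasFDerivAt
      have hk : HasFDerivAt (fun x : E8 n => kap n i x a) (-(a.1 • vc8 n i)) y := by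
        simpa [kap] using (hv.mul_const a.1).const_sub (a.2.1 i)
      exact hdi.mul hk
    exact h1.add h2
  rw [h.fderiv, ContinuousLinearMap.add_apply, ContinuousLinearMap.sum_apply]
  congr 1
  · simp [mul_comm]
  · refine Finset.sum_congr rfl fun i _ => ?_
    simp [kap]
    ring

lemma fderiv_vert (n : ℕ) (L : E8 n → ℝ) (x : E8 n) (q v : Fin n → ℝ) :
    fderiv ℝ L x ((0:ℝ), q, v) = ∑ i, q i * dLq n L i x + ∑ i, v i * dLv n L i x := by
  have e1 : ∀ w : Fin n → ℝ, w = ∑ i, w i • (Pi.single i 1 : Fin n → ℝ) := by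
    intro w
    funext j
    simp [Finset.sum_apply, Pi.single_apply, Finset.sum_ite_eq, Finset.sum_ite_eq', mul_comm]
  have key : (((0:ℝ), q, v) : E8 n)
      = ∑ i, (q i • (((0:ℝ), Pi.single i 1, (0:Fin n → ℝ)) : E8 n)
            + v i • (((0:ℝ), (0:Fin n → ℝ), Pi.single i 1) : E8 n)) := by
    rw [Prod.ext_iff, Prod.ext_iff]
    refine ⟨?_, ?_, ?_⟩ <;>
      simp [Prod.fst_sum, Prod.snd_sum, ← e1 q, ← e1 v]
  rw [key, map_sum, ← Finset.sum_add_distrib]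
  refine Finset.sum_congr rfl fun i _ => ?_
  rw [map_add, _root_.map_smul, _root_.map_smul]
  simp [dLq, dLv]

lemma tderiv_one {F : Type*} [NormedAddCommGroup F] [NormedSpace ℝ F]
    {T : F → ℝ} (φ : F →L[ℝ] ℝ) {γ : ℝ → F} {I : Set ℝ} {t : ℝ}
    (hs : IsSection T γ I) (ht : t ∈ I) (hφ : ∀ y, φ y = T y) :
    φ (deriv γ t) = 1 := by
  have hd : DifferentiableAt ℝ γ t :=
    (hs.smooth.contDiffAt (hs.isOpen.mem_nhds ht)).differentiableAt (by simp)
  have h1 : HasDerivAt (fun s => φ (γ s)) (φ (deriv γ t)) t :=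
    φ.hasFDerivAt.comp_hasDerivAt t hd.hasDerivAt
  have h2 : HasDerivAt (fun s => φ (γ s)) 1 t := by
    have he : (fun s => φ (γ s)) =ᶠ[nhds t] fun s => s := by
      filter_upwards [hs.isOpen.mem_nhds ht] with s hsI
      rw [hφ]; exact hs.proj s hsI
    exact (hasDerivAt_id t).congr_of_eventuallyEq he
  exact h1.unique h2

lemma section_diff {F : Type*} [NormedAddCommGroup F] [NormedSpace ℝ F]
    {T : F → ℝ} {γ : ℝ → F} {I : Set ℝ} {t : ℝ}
    (hs : IsSection T γ I) (ht : t ∈ I) : DifferentiableAt ℝ γ t :=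
  (hs.smooth.contDiffAt (hs.isOpen.mem_nhds ht)).differentiableAt (by simp)

lemma clm_deriv {F G : Type*} [NormedAddCommGroup F] [NormedSpace ℝ F]
    [NormedAddCommGroup G] [NormedSpace ℝ G]
    (φ : F →L[ℝ] G) {γ : ℝ → F} {t : ℝ} (h : DifferentiableAt ℝ γ t) :
    HasDerivAt (fun s => φ (γ s)) (φ (deriv γ t)) t :=
  φ.hasFDerivAt.comp_hasDerivAt t h.hasDerivAt

/-- The GVP `(Ω_U, ∅, Γ(V(π∘π')))` (the Skinner–Rusk/unified formalism) is
dynamically `π'`-equivalent to the GVP `(dΘ_L, (∅, I₁ᵛᵃᵏ), Γ(V(π)))`: composition with `π'`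
maps its solutions injectively onto the solutions of the latter. -/
theorem unified_formalism_equivalence (n : ℕ) (L : E8 n → ℝ) (hL : ContDiff ℝ ∞ L) :
    (∀ (γ' : ℝ → E14 n) (I : Set ℝ), IsSolU14 n L γ' I →
        IsSolE14 n L (fun t => (γ' t).1) I) ∧
    (∀ (γ : ℝ → E8 n) (I : Set ℝ), IsSolE14 n L γ I →
        ∃ γ' : ℝ → E14 n, IsSolU14 n L γ' I ∧ ∀ t ∈ I, (γ' t).1 = γ t) ∧
    (∀ (γ₁ γ₂ : ℝ → E14 n) (I : Set ℝ), IsSolU14 n L γ₁ I → IsSolU14 n L γ₂ I →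
        (∀ t ∈ I, (γ₁ t).1 = (γ₂ t).1) → ∀ t ∈ I, γ₁ t = γ₂ t) := by
  classical
  have hdLv : ∀ i, ContDiff ℝ ∞ (dLv n L i) := contDiff_dLv n L hL
  set tc8 : E8 n →L[ℝ] ℝ := ContinuousLinearMap.fst ℝ ℝ ((Fin n → ℝ) × (Fin n → ℝ)) with htc8
  set tc14 : E14 n →L[ℝ] ℝ := tc8.comp (ContinuousLinearMap.fst ℝ (E8 n) (Fin n → ℝ)) with htc14
  have keyU : ∀ (γ' : ℝ → E14 n) (I : Set ℝ), IsSolU14 n L γ' I → ∀ t ∈ I,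
      (∀ i, kap n i ((γ' t).1) ((deriv γ' t).1) = 0) ∧
      (∀ i, (γ' t).2 i = dLv n L i ((γ' t).1)) ∧
      (∀ i, (deriv γ' t).2 i = dLq n L i ((γ' t).1)) := by
    rintro γ' I ⟨hsec, hdyn⟩ t ht
    have hD1 : (deriv γ' t).1.1 = 1 := tderiv_one tc14 hsec ht (fun y => rfl)
    have h1 : ∀ i, kap n i ((γ' t).1) ((deriv γ' t).1) = 0 := by
      intro i
      have hc := hdyn (fun _ => ((0 : E8 n), Pi.single i 1)) contDiff_const (fun _ => rfl) t ht
      rw [omega_formula n L hL] at hc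
      simpa [kap, hD1, Pi.single_apply, Finset.sum_ite_eq, Finset.sum_ite_eq'] using hc
    have h2 : ∀ i, (γ' t).2 i = dLv n L i ((γ' t).1) := by
      intro i
      have hc := hdyn (fun _ => ((((0:ℝ), (0:Fin n → ℝ), Pi.single i 1) : E8 n), (0 : Fin n → ℝ)))
        contDiff_const (fun _ => rfl) t ht
      rw [omega_formula n L hL] at hc
      simp [kap, hD1, Pi.single_apply, Finset.sum_ite_eq, Finset.sum_ite_eq'] at hc
      have hd : dLv n L i ((γ' t).1)
          = (fderiv ℝ L ((γ' t).1)) (0, 0, Pi.single i 1) := rfl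
      rw [hd]; linarith [hc]
    have h3 : ∀ i, (deriv γ' t).2 i = dLq n L i ((γ' t).1) := by
      intro i
      have hc := hdyn (fun _ => ((((0:ℝ), Pi.single i 1, (0:Fin n → ℝ)) : E8 n), (0 : Fin n → ℝ)))
        contDiff_const (fun _ => rfl) t ht
      rw [omega_formula n L hL] at hc
      simp [kap, hD1, h1, Pi.single_apply, Finset.sum_ite_eq, Finset.sum_ite_eq'] at hc
      have hd : dLq n L i ((γ' t).1)
          = (fderiv ℝ L ((γ' t).1)) (0, Pi.single i 1, 0) := rfl
      rw [hd]; linarith [hc]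
    exact ⟨h1, h2, h3⟩
  refine ⟨?_, ?_, ?_⟩
  · -- forward
    rintro γ' I ⟨hsec, hdyn⟩
    have hkey := keyU γ' I ⟨hsec, hdyn⟩
    have hderiv1 : ∀ t ∈ I, deriv (fun s => (γ' s).1) t = (deriv γ' t).1 := fun t ht =>
      (clm_deriv (ContinuousLinearMap.fst ℝ (E8 n) (Fin n → ℝ)) (section_diff hsec ht)).deriv
    refine ⟨?_, ?_, ?_⟩
    · exact { isOpen := hsec.isOpen, ordConnected := hsec.ordConnected,
              nonempty := hsec.nonempty,
              smooth := (ContinuousLinearMap.fst ℝ (E8 n) (Fin n → ℝ)).contDiff.comp_contDiffOn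
                hsec.smooth,
              proj := fun t ht => hsec.proj t ht }
    · rintro α ⟨f, hf, hform⟩ t ht
      rw [hform, hderiv1 t ht]
      have h0 := (hkey t ht).1
      simp [h0]
    · rintro ξ ⟨hξs, hξv⟩ t ht
      have hD1 : (deriv γ' t).1.1 = 1 := tderiv_one tc14 hsec ht (fun y => rfl)
      have hkt := hkey t ht
      have hγd : HasDerivAt (fun s => (γ' s).1) ((deriv γ' t).1) t :=
        clm_deriv (ContinuousLinearMap.fst ℝ (E8 n) (Fin n → ℝ)) (section_diff hsec ht)
      have hA : ∀ i, fderiv ℝ (dLv n L i) ((γ' t).1) ((deriv γ' t).1) = dLq n L i ((γ' t).1) := by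
        intro i
        have hc1 : HasDerivAt (fun s => dLv n L i ((γ' s).1))
            (fderiv ℝ (dLv n L i) ((γ' t).1) ((deriv γ' t).1)) t :=
          (((hdLv i).differentiable (by simp)) _).hasFDerivAt.comp_hasDerivAt t hγd
        have hc2 : HasDerivAt (fun s => (γ' s).2 i) ((deriv γ' t).2 i) t :=
          clm_deriv (pc n i) (section_diff hsec ht)
        have he : (fun s => dLv n L i ((γ' s).1)) =ᶠ[nhds t] (fun s => (γ' s).2 i) := by
          filter_upwards [hsec.isOpen.mem_nhds ht] with s hsI
          exact ((hkey s hsI).2.1 i).symm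
        have hc3 : HasDerivAt (fun s => dLv n L i ((γ' s).1)) ((deriv γ' t).2 i) t :=
          hc2.congr_of_eventuallyEq he
        rw [hc1.unique hc3]
        exact hkt.2.2 i
      rw [hderiv1 t ht]
      rcases hu : ξ ((γ' t).1) with ⟨u1, uq, uv⟩
      have hu1 : u1 = 0 := by
        have h := hξv ((γ' t).1); rw [hu] at h; exact h
      subst hu1
      have hk0 : ∀ j, (deriv γ' t).1.2.1 j = (γ' t).1.2.2 j := by
        intro j
        have hh := hkt.1 j
        simp [kap, hD1] at hh
        linarith [hh]
      simp only [extd1]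
      rw [fderiv_ThetaSlice n L hL, fderiv_ThetaSlice n L hL, fderiv_vert n L]
      simp [kap, hD1, hA, hk0, mul_comm]
  · -- backward
    rintro γ I ⟨hsec, hJ, hdyn⟩
    have hkap : ∀ t ∈ I, ∀ i, kap n i (γ t) (deriv γ t) = 0 := by
      intro t ht i
      have h := hJ (fun x w => ∑ j, (if j = i then (1:ℝ) else 0) * kap n j x w)
        ⟨fun j _ => if j = i then 1 else 0, fun j => contDiff_const, fun x w => rfl⟩ t ht
      simpa [Finset.sum_ite_eq, Finset.sum_ite_eq'] using h
    have hD1 : (∀ t ∈ I, (deriv γ t).1 = 1) := fun t ht => tderiv_one tc8 hsec ht (fun y => rfl)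
    have hEL : ∀ t ∈ I, ∀ i, fderiv ℝ (dLv n L i) (γ t) (deriv γ t) = dLq n L i (γ t) := by
      intro t ht i
      have hc := hdyn (fun _ => (((0:ℝ), Pi.single i 1, (0:Fin n → ℝ)) : E8 n))
        ⟨contDiff_const, fun _ => rfl⟩ t ht
      have hk0 : ∀ j, (deriv γ t).2.1 j = (γ t).2.2 j := by
        intro j
        have hh := hkap t ht j
        simp [kap, hD1 t ht] at hh
        linarith [hh]
      simp only [extd1] at hc
      rw [fderiv_ThetaSlice n L hL, fderiv_ThetaSlice n L hL] at hc
      simp [kap, hD1 t ht, hk0, Pi.single_apply, Finset.sum_ite_eq,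
        Finset.sum_ite_eq'] at hc
      have hd : dLq n L i (γ t)
          = (fderiv ℝ L (γ t)) (0, Pi.single i 1, 0) := rfl
      rw [hd]; linarith [hc]
    refine ⟨fun s => (γ s, fun i => dLv n L i (γ s)), ⟨?_, ?_⟩, fun t ht => rfl⟩
    · exact { isOpen := hsec.isOpen, ordConnected := hsec.ordConnected,
              nonempty := hsec.nonempty,
              smooth := hsec.smooth.prodMk
                (contDiffOn_pi.2 fun i => (hdLv i).comp_contDiffOn hsec.smooth),
              proj := fun t ht => hsec.proj t ht }
    · intro ξ hξs hξv t ht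
      have hdp : HasDerivAt (fun s => (fun i => dLv n L i (γ s)))
          (fun i => fderiv ℝ (dLv n L i) (γ t) (deriv γ t)) t :=
        hasDerivAt_pi.2 fun i =>
          (((hdLv i).differentiable (by simp)) _).hasFDerivAt.comp_hasDerivAt t
            (section_diff hsec ht).hasDerivAt
      have hγ' : HasDerivAt (fun s => (γ s, fun i => dLv n L i (γ s)))
          (deriv γ t, fun i => fderiv ℝ (dLv n L i) (γ t) (deriv γ t)) t :=
        (section_diff hsec ht).hasDerivAt.prodMk hdp
      rw [omega_formula n L hL, hγ'.deriv]
      rcases hu : ξ (γ t, fun i => dLv n L i (γ t)) with ⟨⟨u1, uq, uv⟩, up⟩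
      have hu1 : u1 = 0 := by
        have h := hξv (γ t, fun i => dLv n L i (γ t)); rw [hu] at h; exact h
      subst hu1
      have hk0 : ∀ j, (deriv γ t).2.1 j = (γ t).2.2 j := by
        intro j
        have hh := hkap t ht j
        simp [kap, hD1 t ht] at hh
        linarith [hh]
      rw [fderiv_vert n L]
      simp [kap, hD1 t ht, hk0, hEL t ht, mul_comm]
      ring
  · -- injectivity
    rintro γ₁ γ₂ I h1 h2 hbase t ht
    have k1 := (keyU γ₁ I h1 t ht).2.1
    have k2 := (keyU γ₂ I h2 t ht).2.1
    have hb := hbase t ht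
    refine Prod.ext_iff.mpr ⟨hb, funext fun i => ?_⟩
    rw [k1 i, k2 i, hb]


end VPGeom
end
end

section
/- Let E = ℝ × ℝⁿ × ℝⁿ × ℝ^{k+r} with coordinates (t, q^i, v^i, s^α, u^a), κ^i = dq^i − v^i dt, I₁^{vak} = ⟨κ^i⟩, I₁^{nh} = ⟨η¹,…,η^k⟩ compatible constraints (τ ∧ η¹ ∧ … ∧ η^k ∧ κ¹ ∧ dκ¹ ∧ … ∧ κⁿ ∧ dκⁿ nowhere zero and i_{∂/∂v^i}η^α = 0 for all i, α), and let L : E → ℝ be smooth, Θ_L = L dt + (∂L/∂v^i)κ^i. Choose R_α with i_{R_α}τ = 0, i_{R_α}η^β = δ_α^β, set σ_α = i_{R_α}dΘ_L and Ω̄ = dΘ_L + σ_α ∧ η^α. Let E' = E × ℝ^{n+k} with coordinates (p_i, p_α), π' : E' → E, and Ω_U = dL' ∧ dt + d(p_i κ'^i) + dp_α ∧ η'^α, where primes denote pullback by π'. Then the GVP (Ω_U, ∅, Γ(V(π∘π'))) is an extension of the GVP (Ω̄, (∅, I₁^{nh}, I₁^{vak}), Γ(V(π))): the map γ' ↦ π'∘γ'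 sends Sol(Ω_U, ∅, Γ(V(π∘π'))) onto Sol(Ω̄, (∅, I₁^{nh}, I₁^{vak}), Γ(V(π))). -/
open MeasureTheory Set Finset
open scoped ContDiff

noncomputable section

namespace VPGeom

/-- `E = J¹ρ × N ≅ ℝ × ℝⁿ × ℝⁿ × ℝᵏ × ℝʳ` with coordinates `(t, qⁱ, vⁱ, sᵅ, uᵃ)`. -/
abbrev E12 (n k r : ℕ) := ℝ × (Fin n → ℝ) × (Fin n → ℝ) × (Fin k → ℝ) × (Fin r → ℝ)

/-- The Cartan 1-forms `κⁱ = dqⁱ - vⁱ dt` pulled back to `E`. -/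
def kap12 (n k r : ℕ) (i : Fin n) : E12 n k r → E12 n k r → ℝ := fun x w =>
  w.2.1 i - x.2.2.1 i * w.1

/-- `∂L/∂vⁱ`. -/
def dLv12 (n k r : ℕ) (L : E12 n k r → ℝ) (i : Fin n) : E12 n k r → ℝ := fun x =>
  fderiv ℝ L x ((0 : ℝ), (0 : Fin n → ℝ), Pi.single i 1, (0 : Fin k → ℝ), (0 : Fin r → ℝ))

/-- The Poincaré–Cartan 1-form `Θ_L = L dt + (∂L/∂vⁱ) κⁱ`. -/
def ThetaL12 (n k r : ℕ) (L : E12 n k r → ℝ) : E12 n k r → E12 n k r → ℝ := fun x w =>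
  L x * w.1 + ∑ i, dLv12 n k r L i x * kap12 n k r i x w

/-- The constraints `I₁ⁿʰ = ⟨η¹,…,ηᵏ⟩` and `I₁ᵛᵃᵏ = ⟨κ¹,…,κⁿ⟩` are compatible:
the `ηᵅ` number `k`; the wedge `τ ∧ (⋀ηᵅ) ∧ (⋀ κⁱ ∧ dκⁱ)` vanishes nowhere (expressed as the
pointwise linear independence of the covectors `τ, ηᵅ, κⁱ, dvⁱ`, which is the value of that
wedge condition since `dκⁱ = dt ∧ dvⁱ`); and `C ⊆ ⋂ ker ηᵅ`, i.e. `i_{∂/∂vⁱ} ηᵅ = 0`. -/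
def CompatibleConstraints (n k r : ℕ) (η : Fin k → E12 n k r → E12 n k r → ℝ) : Prop :=
  (∀ x : E12 n k r, LinearIndependent ℝ
    (Fin.cons (fun w : E12 n k r => w.1)
      (Fin.append (fun a : Fin k => η a x)
        (Fin.append (fun i : Fin n => kap12 n k r i x)
          (fun i : Fin n => fun w : E12 n k r => w.2.2.1 i))) :
      Fin (k + (n + n) + 1) → E12 n k r → ℝ)) ∧
  (∀ (i : Fin n) (a : Fin k) (x : E12 n k r),
    η a x ((0 : ℝ), (0 : Fin n → ℝ), Pi.single i 1, (0 : Fin k → ℝ), (0 : Fin r → ℝ)) = 0)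

/-- Membership in the `C^∞(E)`-module `⟨I₁ᵛᵃᵏ, I₁ⁿʰ⟩` generated by the `κⁱ` and the `ηᵅ`. -/
def InKapEtaSpan (n k r : ℕ) (η : Fin k → E12 n k r → E12 n k r → ℝ)
    (α : E12 n k r → E12 n k r → ℝ) : Prop :=
  ∃ (f : Fin n → E12 n k r → ℝ) (g : Fin k → E12 n k r → ℝ),
    (∀ j, ContDiff ℝ ∞ (f j)) ∧ (∀ a, ContDiff ℝ ∞ (g a)) ∧
    ∀ x w, α x w = ∑ j, f j x * kap12 n k r j x w + ∑ a, g a x * η a x w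

/-- The admissible variations: vertical smooth vector fields `ξ` with `i_ξ ηᵅ ∈ (I₀)` and
`ℒ_ξ κⁱ ∈ ⟨I₁ᵛᵃᵏ, I₁ⁿʰ⟩`. -/
def Adm12 (n k r : ℕ) (I₀ : Set (E12 n k r → ℝ))
    (η : Fin k → E12 n k r → E12 n k r → ℝ) : Set (E12 n k r → E12 n k r) :=
  {ξ | ContDiff ℝ ∞ ξ ∧ (∀ x, (ξ x).1 = 0) ∧
    (∀ a : Fin k, InIdeal I₀ fun x => η a x (ξ x)) ∧
    ∀ i : Fin n, InKapEtaSpan n k r η (lie1 ξ (kap12 n k r i))}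

/-- `⟨A⟩^{B(π)}`: all finite `B(π)`-linear combinations of elements of `A`. -/
def BSpan12 (n k r : ℕ) (A : Set (E12 n k r → E12 n k r)) : Set (E12 n k r → E12 n k r) :=
  {ξ | ∃ (m : ℕ) (g : Fin m → ℝ → ℝ) (ζ : Fin m → E12 n k r → E12 n k r),
    (∀ j, ContDiff ℝ ∞ (g j)) ∧ (∀ j, ζ j ∈ A) ∧ ξ = fun x => ∑ j, g j x.1 • ζ j x}

/-- The π-vertical smooth vector fields `Γ(V(π))`. -/
def Vert12 (n k r : ℕ) : Set (E12 n k r → E12 n k r) :=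
  {ξ | ContDiff ℝ ∞ ξ ∧ ∀ x, (ξ x).1 = 0}

end VPGeom

namespace VPGeom

/-- `E' = E × ℝⁿ⁺ᵏ` with additional coordinates `(pᵢ, p_α)`. -/
abbrev E16 (n k r : ℕ) := E12 n k r × (Fin n → ℝ) × (Fin k → ℝ)

/-- The unified form `Ω_U = dL' ∧ dt + d(pᵢ κ'ⁱ) + dp_α ∧ η'ᵅ` on `E'`. -/
def OmegaU16 (n k r : ℕ) (L : E12 n k r → ℝ)
    (η : Fin k → E12 n k r → E12 n k r → ℝ) : E16 n k r → E16 n k r → E16 n k r → ℝ :=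
  fun x u v =>
    wedge11 (fun y w => fderiv ℝ (fun z : E16 n k r => L z.1) y w)
        (fun _ w => w.1.1) x u v +
      extd1 (fun y w => ∑ i, y.2.1 i * kap12 n k r i y.1 w.1) x u v +
      ∑ a, (u.2.2 a * η a x.1 v.1 - v.2.2 a * η a x.1 u.1)

/-- Solution sections of the GVP `(Ω_U, ∅, Γ(V(π∘π')))` on `E'`. -/
def IsSolU16 (n k r : ℕ) (L : E12 n k r → ℝ) (η : Fin k → E12 n k r → E12 n k r → ℝ)
    (γ' : ℝ → E16 n k r) (I : Set ℝ) : Prop :=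
  IsSection (fun x => x.1.1) γ' I ∧
  ∀ ξ : E16 n k r → E16 n k r, ContDiff ℝ ∞ ξ → (∀ x, (ξ x).1.1 = 0) →
    ∀ t ∈ I, OmegaU16 n k r L η (γ' t) (ξ (γ' t)) (deriv γ' t) = 0

/-- Solution sections of the GVP `(Ω̄, (∅, I₁ⁿʰ, I₁ᵛᵃᵏ), Γ(V(π)))` on `E`. -/
def IsSolE16 (n k r : ℕ) (OmgBar : E12 n k r → E12 n k r → E12 n k r → ℝ)
    (η : Fin k → E12 n k r → E12 n k r → ℝ) (γ : ℝ → E12 n k r) (I : Set ℝ) : Prop :=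
  IsSection Prod.fst γ I ∧
  (∀ a : Fin k, ∀ t ∈ I, η a (γ t) (deriv γ t) = 0) ∧
  (∀ i : Fin n, ∀ t ∈ I, kap12 n k r i (γ t) (deriv γ t) = 0) ∧
  ∀ ξ ∈ Vert12 n k r, ∀ t ∈ I, OmgBar (γ t) (ξ (γ t)) (deriv γ t) = 0

section Toolbox

variable {n k r : ℕ} {L : E12 n k r → ℝ}

/-- coordinate CLM `v i` on `E12` -/
def cV (n k r : ℕ) (i : Fin n) : E12 n k r →L[ℝ] ℝ :=
  (ContinuousLinearMap.proj i).comp ((ContinuousLinearMap.fst ℝ _ _).comp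
    ((ContinuousLinearMap.snd ℝ _ _).comp (ContinuousLinearMap.snd ℝ _ _)))

@[simp] lemma cV_apply (i : Fin n) (w : E12 n k r) : cV n k r i w = w.2.2.1 i := rfl

/-- coordinate CLM `p i` on `E16` -/
def cP16 (n k r : ℕ) (i : Fin n) : E16 n k r →L[ℝ] ℝ :=
  (ContinuousLinearMap.proj i).comp ((ContinuousLinearMap.fst ℝ _ _).comp
    (ContinuousLinearMap.snd ℝ _ _))

@[simp] lemma cP16_apply (i : Fin n) (w : E16 n k r) : cP16 n k r i w = w.2.1 i := rfl

/-- coordinate CLM `v i` on `E16` -/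
def cV16 (n k r : ℕ) (i : Fin n) : E16 n k r →L[ℝ] ℝ :=
  (cV n k r i).comp (ContinuousLinearMap.fst ℝ _ _)

@[simp] lemma cV16_apply (i : Fin n) (w : E16 n k r) : cV16 n k r i w = w.1.2.2.1 i := rfl

lemma dLv_smooth (hL : ContDiff ℝ ∞ L) (i : Fin n) : ContDiff ℝ ∞ (dLv12 n k r L i) :=
  (hL.fderiv_right (le_of_eq (by simp))).clm_apply contDiff_const

lemma hasFDerivAt_theta (hL : ContDiff ℝ ∞ L) (x w : E12 n k r) :
    HasFDerivAt (fun y => ThetaL12 n k r L y w)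
      (w.1 • fderiv ℝ L x + ∑ i, (dLv12 n k r L i x • -(w.1 • cV n k r i)
        + kap12 n k r i x w • fderiv ℝ (dLv12 n k r L i) x)) x := by
  have h1 : HasFDerivAt (fun y => L y * w.1) (w.1 • fderiv ℝ L x) x :=
    (hL.differentiable (by simp) x).hasFDerivAt.mul_const w.1
  have h2 : ∀ i : Fin n, HasFDerivAt (fun y => dLv12 n k r L i y * kap12 n k r i y w)
      (dLv12 n k r L i x • -(w.1 • cV n k r i)
        + kap12 n k r i x w • fderiv ℝ (dLv12 n k r L i) x) x := by
    intro i
    have hd : HasFDerivAt (fun y : E12 n k r => dLv12 n k r L i y)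
        (fderiv ℝ (dLv12 n k r L i) x) x :=
      ((dLv_smooth hL i).differentiable (by simp) x).hasFDerivAt
    have hk : HasFDerivAt (fun y : E12 n k r => kap12 n k r i y w)
        (-(w.1 • cV n k r i)) x := by
      have : HasFDerivAt (fun y : E12 n k r => w.2.1 i - y.2.2.1 i * w.1)
          ((0 : E12 n k r →L[ℝ] ℝ) - w.1 • cV n k r i) x :=
        (hasFDerivAt_const _ _).sub (((cV n k r i).hasFDerivAt (x := x)).mul_const w.1)
      simpa [kap12, zero_sub] using this
    exact hd.mul hk
  exact h1.add (HasFDerivAt.fun_sum (fun i _ => h2 i))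

lemma fderiv_theta_apply (hL : ContDiff ℝ ∞ L) (x w u : E12 n k r) :
    fderiv ℝ (fun y => ThetaL12 n k r L y w) x u
      = fderiv ℝ L x u * w.1 + ∑ i, (fderiv ℝ (dLv12 n k r L i) x u * kap12 n k r i x w
        - dLv12 n k r L i x * (u.2.2.1 i * w.1)) := by
  rw [(hasFDerivAt_theta hL x w).fderiv]
  simp only [ContinuousLinearMap.add_apply, ContinuousLinearMap.sum_apply,
    ContinuousLinearMap.smul_apply, ContinuousLinearMap.neg_apply, cV_apply, smul_eq_mul]
  congr 1
  · ring
  · exact Finset.sum_congr rfl fun i _ => by ring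

lemma extd_theta (hL : ContDiff ℝ ∞ L) (x u v : E12 n k r) :
    extd1 (ThetaL12 n k r L) x u v
      = (fderiv ℝ L x u * v.1 - fderiv ℝ L x v * u.1)
        + ∑ i, ((fderiv ℝ (dLv12 n k r L i) x u * kap12 n k r i x v
            - fderiv ℝ (dLv12 n k r L i) x v * kap12 n k r i x u)
          - dLv12 n k r L i x * (u.2.2.1 i * v.1 - v.2.2.1 i * u.1)) := by
  unfold extd1
  rw [fderiv_theta_apply hL x v u, fderiv_theta_apply hL x u v, add_sub_add_comm,
    ← Finset.sum_sub_distrib]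
  congr 1
  exact Finset.sum_congr rfl fun i _ => by ring

lemma extd_theta_shell (hL : ContDiff ℝ ∞ L) (x v : E12 n k r) (hv1 : v.1 = 1)
    (hκ : ∀ i, kap12 n k r i x v = 0) (w : E12 n k r) (hw : w.1 = 0) :
    extd1 (ThetaL12 n k r L) x w v
      = fderiv ℝ L x w - ∑ i, dLv12 n k r L i x * w.2.2.1 i
        - ∑ i, fderiv ℝ (dLv12 n k r L i) x v * w.2.1 i := by
  rw [extd_theta hL x w v, sub_sub, ← Finset.sum_add_distrib]
  rw [show fderiv ℝ L x w - (∑ i, (dLv12 n k r L i x * w.2.2.1 i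
        + fderiv ℝ (dLv12 n k r L i) x v * w.2.1 i))
      = fderiv ℝ L x w + ∑ i, -(dLv12 n k r L i x * w.2.2.1 i
        + fderiv ℝ (dLv12 n k r L i) x v * w.2.1 i) from by
    rw [Finset.sum_neg_distrib]; ring]
  congr 1
  · rw [hv1, hw]; ring
  · refine Finset.sum_congr rfl fun i _ => ?_
    have hkw : kap12 n k r i x w = w.2.1 i := by simp [kap12, hw]
    rw [hκ i, hkw, hv1, hw]
    ring

end Toolbox

section Toolbox2

variable {n k r : ℕ} {L : E12 n k r → ℝ}

lemma hasFDerivAt_pk (x : E16 n k r) (w : E16 n k r) :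
    HasFDerivAt (fun y : E16 n k r => ∑ i, y.2.1 i * kap12 n k r i y.1 w.1)
      (∑ i, (x.2.1 i • -(w.1.1 • cV16 n k r i) + kap12 n k r i x.1 w.1 • cP16 n k r i)) x := by
  refine HasFDerivAt.fun_sum fun i _ => ?_
  have hk : HasFDerivAt (fun y : E16 n k r => kap12 n k r i y.1 w.1)
      (-(w.1.1 • cV16 n k r i)) x := by
    have : HasFDerivAt (fun y : E16 n k r => w.1.2.1 i - y.1.2.2.1 i * w.1.1)
        ((0 : E16 n k r →L[ℝ] ℝ) - w.1.1 • cV16 n k r i) x :=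
      (hasFDerivAt_const _ _).sub (((cV16 n k r i).hasFDerivAt (x := x)).mul_const w.1.1)
    simpa [kap12, zero_sub] using this
  exact ((cP16 n k r i).hasFDerivAt (x := x)).mul hk

lemma fderiv_Lfst (hL : ContDiff ℝ ∞ L) (x : E16 n k r) (u : E16 n k r) :
    fderiv ℝ (fun z : E16 n k r => L z.1) x u = fderiv ℝ L x.1 u.1 := by
  have : HasFDerivAt (fun z : E16 n k r => L z.1)
      ((fderiv ℝ L x.1).comp (ContinuousLinearMap.fst ℝ _ _)) x :=
    (hL.differentiable (by simp) x.1).hasFDerivAt.comp x (hasFDerivAt_fst)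
  rw [this.fderiv]; rfl

lemma omegaU_eval (hL : ContDiff ℝ ∞ L) (η : Fin k → E12 n k r → E12 n k r → ℝ)
    (x u v : E16 n k r) :
    OmegaU16 n k r L η x u v
      = (fderiv ℝ L x.1 u.1 * v.1.1 - fderiv ℝ L x.1 v.1 * u.1.1)
        + ∑ i, (u.2.1 i * kap12 n k r i x.1 v.1 - x.2.1 i * (u.1.2.2.1 i * v.1.1)
            - (v.2.1 i * kap12 n k r i x.1 u.1 - x.2.1 i * (v.1.2.2.1 i * u.1.1)))
        + ∑ a, (u.2.2 a * η a x.1 v.1 - v.2.2 a * η a x.1 u.1) := by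
  have h2u := (hasFDerivAt_pk x v).fderiv
  have h2v := (hasFDerivAt_pk x u).fderiv
  unfold OmegaU16 wedge11 extd1
  beta_reduce
  rw [h2u, h2v, fderiv_Lfst hL, fderiv_Lfst hL]
  simp only [ContinuousLinearMap.sum_apply, ContinuousLinearMap.add_apply,
    ContinuousLinearMap.smul_apply, ContinuousLinearMap.neg_apply, cP16_apply, cV16_apply,
    smul_eq_mul]
  rw [← Finset.sum_sub_distrib]
  congr 2
  exact Finset.sum_congr rfl fun i _ => by ring

lemma omegaU_shell (hL : ContDiff ℝ ∞ L) (η : Fin k → E12 n k r → E12 n k r → ℝ)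
    (x v : E16 n k r) (hv1 : v.1.1 = 1) (w : E16 n k r) (hw : w.1.1 = 0) :
    OmegaU16 n k r L η x w v
      = fderiv ℝ L x.1 w.1 + ∑ i, w.2.1 i * kap12 n k r i x.1 v.1
        - ∑ i, x.2.1 i * w.1.2.2.1 i - ∑ i, v.2.1 i * w.1.2.1 i
        + ∑ a, w.2.2 a * η a x.1 v.1 - ∑ a, v.2.2 a * η a x.1 w.1 := by
  rw [omegaU_eval hL η x w v]
  have hkw : ∀ i, kap12 n k r i x.1 w.1 = w.1.2.1 i := fun i => by simp [kap12, hw]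
  have e1 : ∀ i : Fin n, w.2.1 i * kap12 n k r i x.1 v.1 - x.2.1 i * (w.1.2.2.1 i * v.1.1)
      - (v.2.1 i * kap12 n k r i x.1 w.1 - x.2.1 i * (v.1.2.2.1 i * w.1.1))
      = w.2.1 i * kap12 n k r i x.1 v.1 - x.2.1 i * w.1.2.2.1 i - v.2.1 i * w.1.2.1 i := by
    intro i; rw [hv1, hw, hkw i]; ring
  rw [Finset.sum_congr rfl (fun i _ => e1 i), hv1, hw, Finset.sum_sub_distrib,
    Finset.sum_sub_distrib, Finset.sum_sub_distrib]
  ring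

end Toolbox2

section Toolbox3

variable {n k r : ℕ} {L : E12 n k r → ℝ}

/-- coordinate CLM `q i` on `E12` -/
def cQ (n k r : ℕ) (i : Fin n) : E12 n k r →L[ℝ] ℝ :=
  (ContinuousLinearMap.proj i).comp ((ContinuousLinearMap.fst ℝ _ _).comp
    (ContinuousLinearMap.snd ℝ _ _))

@[simp] lemma cQ_apply (i : Fin n) (w : E12 n k r) : cQ n k r i w = w.2.1 i := rfl

lemma contDiff_extd_theta (hL : ContDiff ℝ ∞ L) {F : Type*} [NormedAddCommGroup F]
    [NormedSpace ℝ F] {g h j : F → E12 n k r} (hg : ContDiff ℝ ∞ g) (hh : ContDiff ℝ ∞ h)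
    (hj : ContDiff ℝ ∞ j) :
    ContDiff ℝ ∞ (fun z => extd1 (ThetaL12 n k r L) (g z) (h z) (j z)) := by
  have hrw : (fun z => extd1 (ThetaL12 n k r L) (g z) (h z) (j z)) = fun z =>
      (fderiv ℝ L (g z) (h z) * (j z).1 - fderiv ℝ L (g z) (j z) * (h z).1)
        + ∑ i, ((fderiv ℝ (dLv12 n k r L i) (g z) (h z) * kap12 n k r i (g z) (j z)
            - fderiv ℝ (dLv12 n k r L i) (g z) (j z) * kap12 n k r i (g z) (h z))
          - dLv12 n k r L i (g z) * ((h z).2.2.1 i * (j z).1 - (j z).2.2.1 i * (h z).1)) :=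
    funext fun z => extd_theta hL (g z) (h z) (j z)
  rw [hrw]
  have happ : ∀ (M : E12 n k r → ℝ), ContDiff ℝ ∞ M → ∀ (u v : F → E12 n k r),
      ContDiff ℝ ∞ u → ContDiff ℝ ∞ v →
      ContDiff ℝ ∞ (fun z => fderiv ℝ M (u z) (v z)) := fun M hM u v hu hv =>
    ((hM.fderiv_right (le_of_eq (by simp))).comp hu).clm_apply hv
  have ht : ∀ (u : F → E12 n k r), ContDiff ℝ ∞ u → ContDiff ℝ ∞ (fun z => (u z).1) :=
    fun u hu => contDiff_fst.comp hu
  have hvv : ∀ (i : Fin n) (u : F → E12 n k r), ContDiff ℝ ∞ u →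
      ContDiff ℝ ∞ (fun z => (u z).2.2.1 i) := fun i u hu => (cV n k r i).contDiff.comp hu
  have hqq : ∀ (i : Fin n) (u : F → E12 n k r), ContDiff ℝ ∞ u →
      ContDiff ℝ ∞ (fun z => (u z).2.1 i) := fun i u hu => (cQ n k r i).contDiff.comp hu
  have hkap : ∀ (i : Fin n) (u v : F → E12 n k r), ContDiff ℝ ∞ u → ContDiff ℝ ∞ v →
      ContDiff ℝ ∞ (fun z => kap12 n k r i (u z) (v z)) := fun i u v hu hv =>
    (hqq i v hv).sub ((hvv i u hu).mul (ht v hv))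
  refine ContDiff.add ?_ (ContDiff.sum fun i _ => ?_)
  · exact ((happ L hL g h hg hh).mul (ht j hj)).sub ((happ L hL g j hg hj).mul (ht h hh))
  · refine ContDiff.sub (ContDiff.sub ?_ ?_) ?_
    · exact (happ _ (dLv_smooth hL i) g h hg hh).mul (hkap i g j hg hj)
    · exact (happ _ (dLv_smooth hL i) g j hg hj).mul (hkap i g h hg hh)
    · exact ((dLv_smooth hL i).comp hg).mul
        (((hvv i h hh).mul (ht j hj)).sub ((hvv i j hj).mul (ht h hh)))

lemma hasDerivAt_intervalIntegral {I : Set ℝ} (hI : IsOpen I) (hconn : I.OrdConnected)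
    {t₀ : ℝ} (ht₀ : t₀ ∈ I) {f : ℝ → ℝ} (hf : ContinuousOn f I) {t : ℝ} (ht : t ∈ I) :
    HasDerivAt (fun s => ∫ u in t₀..s, f u) (f t) t := by
  refine intervalIntegral.integral_hasDerivAt_right ?_ ?_ ?_
  · exact (hf.mono (hconn.uIcc_subset ht₀ ht)).intervalIntegrable
  · exact hf.stronglyMeasurableAtFilter hI t ht
  · exact hf.continuousAt (hI.mem_nhds ht)

lemma contDiffOn_of_derivOn {I : Set ℝ} (hI : IsOpen I) {F f : ℝ → ℝ}
    (hd : ∀ t ∈ I, HasDerivAt F (f t) t) (hf : ContDiffOn ℝ ∞ f I) :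
    ContDiffOn ℝ ∞ F I := by
  rw [contDiffOn_infty]
  intro m
  have hdiff : DifferentiableOn ℝ F I := fun t ht =>
    (hd t ht).differentiableAt.differentiableWithinAt
  have hder : ContDiffOn ℝ m (deriv F) I :=
    (hf.of_le (by exact_mod_cast le_top)).congr fun t ht => (hd t ht).deriv
  have hs : ContDiffOn ℝ (m + 1) F I :=
    (contDiffOn_succ_iff_deriv_of_isOpen hI).mpr ⟨hdiff, by simp, hder⟩
  exact hs.of_le le_self_add

section SectionHelpers

variable {Eg : Type*} [NormedAddCommGroup Eg] [NormedSpace ℝ Eg]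
variable {Fg : Type*} [NormedAddCommGroup Fg] [NormedSpace ℝ Fg]

lemma IsSection.hasDerivAt' {T : Eg → ℝ} {γ : ℝ → Eg} {I : Set ℝ} (h : IsSection T γ I)
    {t : ℝ} (ht : t ∈ I) : HasDerivAt γ (deriv γ t) t :=
  ((h.smooth.contDiffAt (h.isOpen.mem_nhds ht)).differentiableAt (by simp)).hasDerivAt

lemma deriv_fst_eq_one {P : Type*} [NormedAddCommGroup P] [NormedSpace ℝ P] {γ : ℝ → ℝ × P}
    {I : Set ℝ} (hI : IsOpen I) (hproj : ∀ s ∈ I, (γ s).1 = s) {t : ℝ} (ht : t ∈ I)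
    (hγ : HasDerivAt γ (deriv γ t) t) : (deriv γ t).1 = 1 := by
  have h1 : HasDerivAt (fun s => (γ s).1) ((deriv γ t).1) t := by
    simpa [Function.comp_def] using (ContinuousLinearMap.fst ℝ ℝ P).hasFDerivAt.comp_hasDerivAt t hγ
  have h2 : HasDerivAt (fun s => (γ s).1) 1 t := by
    refine (hasDerivAt_id t).congr_of_eventuallyEq ?_
    filter_upwards [hI.mem_nhds ht] with s hs using hproj s hs
  exact h1.unique h2

lemma hasDerivAt_congr_on {f g : ℝ → Fg} {I : Set ℝ} (hI : IsOpen I)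
    (heq : ∀ s ∈ I, f s = g s) {t : ℝ} (ht : t ∈ I) {v : Fg} (h : HasDerivAt g v t) :
    HasDerivAt f v t := by
  refine h.congr_of_eventuallyEq ?_
  filter_upwards [hI.mem_nhds ht] with s hs using heq s hs

end SectionHelpers

end Toolbox3

section Pointwise

variable {n k r : ℕ} {L : E12 n k r → ℝ} {η : Fin k → E12 n k r → E12 n k r → ℝ}
variable {R : Fin k → E12 n k r → E12 n k r}
variable {OmgBar : E12 n k r → E12 n k r → E12 n k r → ℝ}

/-- On-shell, the Euler–Lagrange-type identity implies that `Ω̄` is annihilated by all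
vertical vectors. -/
lemma forward_pointwise (hL : ContDiff ℝ ∞ L)
    (hRτ : ∀ a x, (R a x).1 = 0)
    (hRη : ∀ a b x, η b x (R a x) = if a = b then 1 else 0)
    (hOmgBar : ∀ x u v, OmgBar x u v = extd1 (ThetaL12 n k r L) x u v +
      ∑ a, wedge11 (iota2 (R a) (extd1 (ThetaL12 n k r L))) (η a) x u v)
    (x v : E12 n k r) (p dp : Fin n → ℝ) (dP : Fin k → ℝ)
    (hv1 : v.1 = 1) (hκ : ∀ i, kap12 n k r i x v = 0) (hηv : ∀ a, η a x v = 0)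
    (hp : ∀ i, p i = dLv12 n k r L i x)
    (hdp : ∀ i, dp i = fderiv ℝ (dLv12 n k r L i) x v)
    (hEL : ∀ w : E12 n k r, w.1 = 0 → fderiv ℝ L x w
      = ∑ i, p i * w.2.2.1 i + ∑ i, dp i * w.2.1 i + ∑ a, dP a * η a x w)
    (w : E12 n k r) (hw : w.1 = 0) : OmgBar x w v = 0 := by
  have key : ∀ u : E12 n k r, u.1 = 0 →
      extd1 (ThetaL12 n k r L) x u v = ∑ a, dP a * η a x u := by
    intro u hu
    rw [extd_theta_shell hL x v hv1 hκ u hu, hEL u hu]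
    rw [Finset.sum_congr rfl (fun i (_ : i ∈ Finset.univ) => by rw [hp i] :
        ∀ i ∈ Finset.univ, p i * u.2.2.1 i = dLv12 n k r L i x * u.2.2.1 i),
      Finset.sum_congr rfl (fun i (_ : i ∈ Finset.univ) => by rw [hdp i] :
        ∀ i ∈ Finset.univ, dp i * u.2.1 i = fderiv ℝ (dLv12 n k r L i) x v * u.2.1 i)]
    ring
  have hσ : ∀ a, extd1 (ThetaL12 n k r L) x (R a x) v = dP a := by
    intro a
    rw [key (R a x) (hRτ a x)]
    simp [hRη]
  rw [hOmgBar, key w hw]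
  unfold wedge11 iota2
  simp only [hηv, mul_zero, zero_sub, hσ, key w hw]
  simp [Finset.mul_sum]

/-- From the solution property of `Ω̄` on-shell, the Euler–Lagrange-type identity holds with
multipliers `dP a = σ_a(v)`. -/
lemma backward_pointwise (hL : ContDiff ℝ ∞ L)
    (hOmgBar : ∀ x u v, OmgBar x u v = extd1 (ThetaL12 n k r L) x u v +
      ∑ a, wedge11 (iota2 (R a) (extd1 (ThetaL12 n k r L))) (η a) x u v)
    (x v : E12 n k r)
    (hv1 : v.1 = 1) (hκ : ∀ i, kap12 n k r i x v = 0) (hηv : ∀ a, η a x v = 0)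
    (hBar : ∀ w : E12 n k r, w.1 = 0 → OmgBar x w v = 0)
    (w : E12 n k r) (hw : w.1 = 0) :
    fderiv ℝ L x w = ∑ i, dLv12 n k r L i x * w.2.2.1 i
      + ∑ i, fderiv ℝ (dLv12 n k r L i) x v * w.2.1 i
      + ∑ a, (extd1 (ThetaL12 n k r L) x (R a x) v) * η a x w := by
  have h := hBar w hw
  rw [hOmgBar] at h
  unfold wedge11 iota2 at h
  simp only [hηv, mul_zero, zero_sub] at h
  rw [extd_theta_shell hL x v hv1 hκ w hw] at h
  have h' : fderiv ℝ L x w - ∑ i, dLv12 n k r L i x * w.2.2.1 i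
      - ∑ i, fderiv ℝ (dLv12 n k r L i) x v * w.2.1 i
      = ∑ a, (extd1 (ThetaL12 n k r L) x (R a x) v) * η a x w := by
    have := h
    rw [Finset.sum_neg_distrib] at this
    linarith [this]
  linarith [h']

end Pointwise

/-- For compatible constraints, the GVP `(Ω_U, ∅, Γ(V(π∘π')))` is an
extension of the GVP `(Ω̄, (∅, I₁ⁿʰ, I₁ᵛᵃᵏ), Γ(V(π)))`: composition with `π'` maps its
solutions onto the solutions of the latter. -/
theorem absorption_mixed_constraints (n k r : ℕ) (L : E12 n k r → ℝ)
    (hL : ContDiff ℝ ∞ L)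
    (η : Fin k → E12 n k r → E12 n k r → ℝ) (hη : ∀ a, IsForm1 (η a))
    (hcompat : CompatibleConstraints n k r η)
    (R : Fin k → E12 n k r → E12 n k r) (hR : ∀ a, ContDiff ℝ ∞ (R a))
    (hRτ : ∀ a x, (R a x).1 = 0)
    (hRη : ∀ a b x, η b x (R a x) = if a = b then 1 else 0)
    (OmgBar : E12 n k r → E12 n k r → E12 n k r → ℝ)
    (hOmgBar : ∀ x u v, OmgBar x u v = extd1 (ThetaL12 n k r L) x u v +
      ∑ a, wedge11 (iota2 (R a) (extd1 (ThetaL12 n k r L))) (η a) x u v) :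
    (∀ (γ' : ℝ → E16 n k r) (I : Set ℝ), IsSolU16 n k r L η γ' I →
        IsSolE16 n k r OmgBar η (fun t => (γ' t).1) I) ∧
    (∀ (γ : ℝ → E12 n k r) (I : Set ℝ), IsSolE16 n k r OmgBar η γ I →
        ∃ γ' : ℝ → E16 n k r, IsSolU16 n k r L η γ' I ∧ ∀ t ∈ I, (γ' t).1 = γ t) := by
  have hη0' : ∀ a (x : E12 n k r), η a x 0 = 0 := fun a x => ((hη a).2 x).map_zero
  constructor
  · -- forward direction
    rintro γ' I ⟨hsec, hsol⟩
    have hI : IsOpen I := hsec.isOpen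
    have hsecE : IsSection Prod.fst (fun t => (γ' t).1) I :=
      { isOpen := hsec.isOpen
        ordConnected := hsec.ordConnected
        nonempty := hsec.nonempty
        smooth := contDiff_fst.comp_contDiffOn hsec.smooth
        proj := fun t ht => hsec.proj t ht }
    have hdγ' : ∀ t ∈ I, HasDerivAt γ' (deriv γ' t) t := fun t ht => hsec.hasDerivAt' ht
    have hd1 : ∀ t ∈ I, HasDerivAt (fun s => (γ' s).1) ((deriv γ' t).1) t := fun t ht => by
      simpa [Function.comp_def] using (ContinuousLinearMap.fst ℝ (E12 n k r)
        ((Fin n → ℝ) × (Fin k → ℝ))).hasFDerivAt.comp_hasDerivAt t (hdγ' t ht)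
    have hder1 : ∀ t ∈ I, deriv (fun s => (γ' s).1) t = (deriv γ' t).1 := fun t ht =>
      (hd1 t ht).deriv
    have hv1 : ∀ t ∈ I, (deriv γ' t).1.1 = 1 := by
      intro t ht
      have hdd : HasDerivAt (fun s => (γ' s).1) (deriv (fun s => (γ' s).1) t) t :=
        (hder1 t ht) ▸ hd1 t ht
      have := deriv_fst_eq_one hI (fun s hs => hsec.proj s hs) ht hdd
      rwa [hder1 t ht] at this
    have hU : ∀ t ∈ I, ∀ w : E16 n k r, w.1.1 = 0 →
        OmegaU16 n k r L η (γ' t) w (deriv γ' t) = 0 := fun t ht w hw =>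
      hsol (fun _ => w) contDiff_const (fun _ => hw) t ht
    have main : ∀ t ∈ I,
        (∀ i, kap12 n k r i (γ' t).1 (deriv γ' t).1 = 0) ∧
        (∀ a, η a (γ' t).1 (deriv γ' t).1 = 0) ∧
        (∀ i, (γ' t).2.1 i = dLv12 n k r L i (γ' t).1) ∧
        (∀ w : E12 n k r, w.1 = 0 → fderiv ℝ L (γ' t).1 w
          = ∑ i, (γ' t).2.1 i * w.2.2.1 i + ∑ i, (deriv γ' t).2.1 i * w.2.1 i
            + ∑ a, (deriv γ' t).2.2 a * η a (γ' t).1 w) := by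
      intro t ht
      refine ⟨?_, ?_, ?_, ?_⟩
      · intro i
        have h := hU t ht (0, Pi.single i 1, 0) rfl
        rw [omegaU_shell hL η _ _ (hv1 t ht) _ rfl] at h
        simpa [hη0', kap12, Pi.single_apply] using h
      · intro a
        have h := hU t ht (0, 0, Pi.single a 1) rfl
        rw [omegaU_shell hL η _ _ (hv1 t ht) _ rfl] at h
        simpa [hη0', Pi.single_apply] using h
      · intro i
        have h := hU t ht (((0:ℝ), (0 : Fin n → ℝ), Pi.single i 1, (0 : Fin k → ℝ),
          (0 : Fin r → ℝ)), 0, 0) rfl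
        rw [omegaU_shell hL η _ _ (hv1 t ht) _ rfl] at h
        have hcv : ∀ a, η a (γ' t).1 ((0:ℝ), (0 : Fin n → ℝ), Pi.single i 1, (0 : Fin k → ℝ),
            (0 : Fin r → ℝ)) = 0 := fun a => hcompat.2 i a (γ' t).1
        simp only [hcv, Pi.single_apply, Pi.zero_apply, zero_mul, mul_zero, mul_ite, mul_one,
          Finset.sum_ite_eq', Finset.mem_univ, if_true, Finset.sum_const_zero, add_zero,
          sub_zero, zero_sub] at h
        have : fderiv ℝ L (γ' t).1 ((0:ℝ), (0 : Fin n → ℝ), Pi.single i 1, (0 : Fin k → ℝ),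
            (0 : Fin r → ℝ)) = dLv12 n k r L i (γ' t).1 := rfl
        rw [this] at h
        linarith [h]
      · intro w hw
        have h := hU t ht ((w, 0, 0) : E16 n k r) hw
        rw [omegaU_shell hL η _ _ (hv1 t ht) _ hw] at h
        simp only [Pi.zero_apply, zero_mul, Finset.sum_const_zero, add_zero] at h
        linarith [h]
    have hdpc : ∀ t ∈ I, ∀ i, (deriv γ' t).2.1 i
        = fderiv ℝ (dLv12 n k r L i) ((γ' t).1) ((deriv γ' t).1) := by
      intro t ht i
      have h1 : HasDerivAt (fun s => (γ' s).2.1 i) ((deriv γ' t).2.1 i) t := by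
        simpa [Function.comp_def] using (cP16 n k r i).hasFDerivAt.comp_hasDerivAt t (hdγ' t ht)
      have h2 : HasDerivAt (fun s => dLv12 n k r L i ((γ' s).1))
          (fderiv ℝ (dLv12 n k r L i) ((γ' t).1) ((deriv γ' t).1)) t := by
        simpa [Function.comp_def] using (((dLv_smooth hL i).differentiable (by simp))
          ((γ' t).1)).hasFDerivAt.comp_hasDerivAt t (hd1 t ht)
      have h3 : HasDerivAt (fun s => (γ' s).2.1 i)
          (fderiv ℝ (dLv12 n k r L i) ((γ' t).1) ((deriv γ' t).1)) t :=
        hasDerivAt_congr_on hI (fun s hs => (main s hs).2.2.1 i) ht h2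
      exact h1.unique h3
    refine ⟨hsecE, ?_, ?_, ?_⟩
    · intro a t ht; rw [hder1 t ht]; exact (main t ht).2.1 a
    · intro i t ht; rw [hder1 t ht]; exact (main t ht).1 i
    · intro ξ hξ t ht
      rw [hder1 t ht]
      exact forward_pointwise hL hRτ hRη hOmgBar (γ' t).1 (deriv γ' t).1
        ((γ' t).2.1) ((deriv γ' t).2.1) ((deriv γ' t).2.2)
        (hv1 t ht) ((main t ht).1) ((main t ht).2.1) ((main t ht).2.2.1)
        (fun i => hdpc t ht i) ((main t ht).2.2.2) (ξ ((γ' t).1)) (hξ.2 ((γ' t).1))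
  · -- backward direction
    rintro γ I ⟨hsec, hηc, hκc, hOm⟩
    have hI : IsOpen I := hsec.isOpen
    obtain ⟨t₀, ht₀⟩ := hsec.nonempty
    have hdγ : ∀ t ∈ I, HasDerivAt γ (deriv γ t) t := fun t ht => hsec.hasDerivAt' ht
    have hv1 : ∀ t ∈ I, (deriv γ t).1 = 1 := fun t ht =>
      deriv_fst_eq_one hI (fun s hs => hsec.proj s hs) ht (hdγ t ht)
    set f : Fin k → ℝ → ℝ :=
      fun a t => extd1 (ThetaL12 n k r L) (γ t) (R a (γ t)) (deriv γ t) with hfdef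
    refine ⟨fun t => (γ t, fun i => dLv12 n k r L i (γ t), fun a => ∫ u in t₀..t, f a u),
      ⟨?_, ?_⟩, fun t ht => rfl⟩
    · -- it is a section
      have hγs : ContDiffOn ℝ ∞ γ I := hsec.smooth
      have hdγs : ContDiffOn ℝ ∞ (deriv γ) I := hγs.deriv_of_isOpen hI (le_of_eq (by simp))
      have hfs : ∀ a, ContDiffOn ℝ ∞ (f a) I := by
        intro a
        have hΦ : ContDiff ℝ ∞ (fun z : E12 n k r × E12 n k r =>
            extd1 (ThetaL12 n k r L) z.1 (R a z.1) z.2) :=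
          contDiff_extd_theta hL contDiff_fst ((hR a).comp contDiff_fst) contDiff_snd
        exact hΦ.comp_contDiffOn (hγs.prodMk hdγs)
      have hPd : ∀ a, ∀ t ∈ I, HasDerivAt (fun s => ∫ u in t₀..s, f a u) (f a t) t :=
        fun a t ht => hasDerivAt_intervalIntegral hI hsec.ordConnected ht₀
          (hfs a).continuousOn ht
      have hPs : ∀ a, ContDiffOn ℝ ∞ (fun s => ∫ u in t₀..s, f a u) I := fun a =>
        contDiffOn_of_derivOn hI (hPd a) (hfs a)
      exact { isOpen := hI
              ordConnected := hsec.ordConnected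
              nonempty := ⟨t₀, ht₀⟩
              smooth := hγs.prodMk ((contDiffOn_pi.mpr fun i =>
                  (dLv_smooth hL i).comp_contDiffOn hγs).prodMk
                (contDiffOn_pi.mpr fun a => hPs a))
              proj := fun t ht => hsec.proj t ht }
    · -- solution property
      intro ξ hξc hξv t ht
      set γ' : ℝ → E16 n k r := fun t =>
        (γ t, fun i => dLv12 n k r L i (γ t), fun a => ∫ u in t₀..t, f a u) with hγ'def
      have hPd : ∀ a, ∀ t ∈ I, HasDerivAt (fun s => ∫ u in t₀..s, f a u) (f a t) t := by
        intro a t' ht'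
        refine hasDerivAt_intervalIntegral hI hsec.ordConnected ht₀ ?_ ht'
        have hγs : ContDiffOn ℝ ∞ γ I := hsec.smooth
        have hdγs : ContDiffOn ℝ ∞ (deriv γ) I := hγs.deriv_of_isOpen hI (le_of_eq (by simp))
        have hΦ : ContDiff ℝ ∞ (fun z : E12 n k r × E12 n k r =>
            extd1 (ThetaL12 n k r L) z.1 (R a z.1) z.2) :=
          contDiff_extd_theta hL contDiff_fst ((hR a).comp contDiff_fst) contDiff_snd
        exact (hΦ.comp_contDiffOn (hγs.prodMk hdγs)).continuousOn
      have hdγ'At : HasDerivAt γ'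
          (deriv γ t, fun i => fderiv ℝ (dLv12 n k r L i) (γ t) (deriv γ t),
            fun a => f a t) t := by
        refine HasDerivAt.prodMk (hdγ t ht) (HasDerivAt.prodMk ?_ ?_)
        · refine hasDerivAt_pi.mpr fun i => ?_
          simpa [Function.comp_def] using (((dLv_smooth hL i).differentiable (by simp))
            (γ t)).hasFDerivAt.comp_hasDerivAt t (hdγ t ht)
        · exact hasDerivAt_pi.mpr fun a => hPd a t ht
      have hder' : deriv γ' t
          = (deriv γ t, fun i => fderiv ℝ (dLv12 n k r L i) (γ t) (deriv γ t),
            fun a => f a t) := hdγ'At.deriv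
      have hEL := backward_pointwise hL hOmgBar (γ t) (deriv γ t) (hv1 t ht)
        (fun i => hκc i t ht) (fun a => hηc a t ht)
        (fun w hw => hOm (fun _ => w) ⟨contDiff_const, fun _ => hw⟩ t ht)
      rw [hder']
      rw [omegaU_shell hL η (γ' t) _ (hv1 t ht) (ξ (γ' t)) (hξv (γ' t))]
      have hk0 : ∀ i, kap12 n k r i (γ t) (deriv γ t) = 0 := fun i => hκc i t ht
      have hη0 : ∀ a, η a (γ t) (deriv γ t) = 0 := fun a => hηc a t ht
      have hx1 : (γ' t).1 = γ t := rfl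
      rw [hx1]
      simp only [hk0, hη0, mul_zero, Finset.sum_const_zero, add_zero]
      rw [hEL (ξ (γ' t)).1 (hξv (γ' t))]
      simp only [hfdef]
      ring

end VPGeom
end
end
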